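/- With F and G the projectors built from the BB84 string states and two arbitrary projective measurements as in the context (with shift string k ∈ {0,1}^n), the operator 2^{W(k)} · F G F is an orthogonal projection, where W(k) is the Hamming weight of k. -/

import Mathlib

open Matrix ComplexOrder
open scoped BigOperators

noncomputable section

/-- The computational-basis qubit state `|a⟩`. -/
def bket (a : Bool) : EuclideanSpace ℂ (Fin 2) := WithLp.toLp 2 fun i =>
  if i = (if a then 1 else 0) then 1 else 0

/-- The Hadamard-basis qubit state `|â⟩ = (|0⟩ + (−1)^a |1⟩)/√2`. -/
def hket (a : Bool) : EuclideanSpace ℂ (Fin 2) := WithLp.toLp 2 fun i =>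
  (Real.sqrt 2 : ℂ)⁻¹ * (if a ∧ i = 1 then -1 else 1)

/-- The BB84 two-qubit state `|ψ^s_{r₀ r₁}⟩`: `|r₀⟩` (computational basis) in tensor
factor `s` and `|r̂₁⟩` (Hadamard basis) in tensor factor `1 − s`. -/
def psiBB84 (s r0 r1 : Bool) : EuclideanSpace ℂ (Fin 2 × Fin 2) := WithLp.toLp 2 fun p =>
  if s then hket r1 p.1 * bket r0 p.2 else bket r0 p.1 * hket r1 p.2

/-- The `n`-pair BB84 string state `|Ψ^s_{r₀ r₁}⟩ = ⊗_j |ψ^{s_j}_{(r₀)_j (r₁)_j}⟩`. -/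
def PsiBB84 {n : ℕ} (s r0 r1 : Fin n → Bool) :
    EuclideanSpace ℂ (Fin n → Fin 2 × Fin 2) := WithLp.toLp 2 fun f =>
  ∏ j, psiBB84 (s j) (r0 j) (r1 j) (f j)

/-- Hamming weight of a bit string. -/
def hamW {n : ℕ} (k : Fin n → Bool) : ℕ := (Finset.univ.filter fun j => k j = true).card

/-- The rank-one projection `|v⟩⟨v|` as a matrix. -/
def vproj {ι : Type*} (v : EuclideanSpace ℂ ι) : Matrix ι ι ℂ :=
  fun i j => v i * (starRingEnd ℂ) (v j)

/-- Triple Kronecker product, with index type `ι₀ × ι₁ × ι₂`. -/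
def kron3 {ι₀ ι₁ ι₂ : Type*} (A : Matrix ι₀ ι₀ ℂ) (B : Matrix ι₁ ι₁ ℂ)
    (C : Matrix ι₂ ι₂ ℂ) : Matrix (ι₀ × ι₁ × ι₂) (ι₀ × ι₁ × ι₂) ℂ :=
  fun p q => A p.1 q.1 * B p.2.1 q.2.1 * C p.2.2 q.2.2

/-- A projective measurement: a family of mutually orthogonal projections summing to `1`. -/
def IsProjMeasurement {X ι : Type*} [Fintype X] [Fintype ι] [DecidableEq ι]
    (P : X → Matrix ι ι ℂ) : Prop :=
  (∀ x, P x * P x = P x) ∧ (∀ x, (P x)ᴴ = P x) ∧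
    (∀ x y, x ≠ y → P x * P y = 0) ∧ ∑ x, P x = 1

/-- `r_{b'}`: selects `r₀` if `b' = 0` and `r₁` if `b' = 1`. -/
def rsel {n : ℕ} (b : Bool) (r0 r1 : Fin n → Bool) : Fin n → Bool := if b then r1 else r0

/-- The operator norm (Schatten ∞-norm, largest singular value). -/
def opNorm {ι : Type*} [Fintype ι] [DecidableEq ι] (A : Matrix ι ι ℂ) : ℝ :=
  ‖Matrix.toEuclideanCLM (𝕜 := ℂ) A‖



-- ===================== auxiliary development =====================

section Aux

/-- Plain dot product `⟨v, w⟩ = ∑ conj (v i) * w i`. -/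
def dot' {ι : Type*} [Fintype ι] (v w : EuclideanSpace ℂ ι) : ℂ :=
  ∑ i, (starRingEnd ℂ) (v i) * w i

/-- Rank-one operator `|v⟩⟨w|`. -/
def outer {ι : Type*} (v w : EuclideanSpace ℂ ι) : Matrix ι ι ℂ :=
  fun i j => v i * (starRingEnd ℂ) (w j)

lemma rsel_false {n : ℕ} (r0 r1 : Fin n → Bool) : rsel false r0 r1 = r0 := rfl
lemma rsel_true {n : ℕ} (r0 r1 : Fin n → Bool) : rsel true r0 r1 = r1 := rfl

lemma sqrt2_inv_mul : ((Real.sqrt 2 : ℂ))⁻¹ * ((Real.sqrt 2 : ℂ))⁻¹ = (2:ℂ)⁻¹ := by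
  rw [← mul_inv, ← Complex.ofReal_mul, Real.mul_self_sqrt (by norm_num : (0:ℝ) ≤ 2)]
  norm_num

set_option maxHeartbeats 2000000 in
lemma dot2_eq (sj kj a b c d : Bool) :
    dot' (psiBB84 sj a b) (psiBB84 (xor sj kj) c d) =
    if kj then (if xor (a && d) (b && c) then -(2:ℂ)⁻¹ else (2:ℂ)⁻¹)
    else (if c = a ∧ d = b then 1 else 0) := by
  have h2 := sqrt2_inv_mul
  cases sj <;> cases kj <;> cases a <;> cases b <;> cases c <;> cases d <;>
    · simp only [dot', Fintype.sum_prod_type, Fin.sum_univ_two, psiBB84, bket, hket]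
      norm_num [Complex.conj_ofReal, map_inv₀, _root_.map_mul]
      all_goals first
      | linear_combination 2*h2
      | linear_combination -2*h2
      | linear_combination h2
      | linear_combination -h2
      | linear_combination 4*h2
      | linear_combination -4*h2

lemma dot2_eq' (s1 s2 a b c d : Bool) :
    dot' (psiBB84 s1 a b) (psiBB84 s2 c d) =
    if s1 = s2 then (if c = a ∧ d = b then 1 else 0)
    else (if xor (a && d) (b && c) then -(2:ℂ)⁻¹ else (2:ℂ)⁻¹) := by
  have h := dot2_eq s1 (xor s1 s2) a b c d
  cases s1 <;> cases s2 <;> simpa using h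

lemma core0 (s1 s2 a c0 c1 d0 d1 : Bool) (h : c1 = d1) :
    (∑ b : Bool, dot' (psiBB84 s2 c0 c1) (psiBB84 s1 a b) *
      dot' (psiBB84 s1 a b) (psiBB84 s2 d0 d1))
    = if s1 = s2 then (if c0 = d0 ∧ a = c0 then 1 else 0)
      else (if c0 = d0 then (2:ℂ)⁻¹ else 0) := by
  subst h
  simp only [Fintype.sum_bool, dot2_eq']
  cases s1 <;> cases s2 <;> cases a <;> cases c0 <;> cases c1 <;> cases d0 <;> norm_num

lemma core1 (s1 s2 b c0 c1 d0 d1 : Bool) (h : c0 = d0) :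
    (∑ a : Bool, dot' (psiBB84 s2 c0 c1) (psiBB84 s1 a b) *
      dot' (psiBB84 s1 a b) (psiBB84 s2 d0 d1))
    = if s1 = s2 then (if c1 = d1 ∧ b = c1 then 1 else 0)
      else (if c1 = d1 then (2:ℂ)⁻¹ else 0) := by
  subst h
  simp only [Fintype.sum_bool, dot2_eq']
  cases s1 <;> cases s2 <;> cases b <;> cases c0 <;> cases c1 <;> cases d1 <;> norm_num

lemma dot_Psi {n : ℕ} (s s' r0 r1 r0' r1' : Fin n → Bool) :
    dot' (PsiBB84 s r0 r1) (PsiBB84 s' r0' r1') =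
    ∏ j, dot' (psiBB84 (s j) (r0 j) (r1 j)) (psiBB84 (s' j) (r0' j) (r1' j)) := by
  unfold dot' PsiBB84
  simp only [map_prod, ← Finset.prod_mul_distrib]
  rw [Finset.prod_univ_sum]
  simp [Fintype.piFinset_univ]

lemma dot_Psi_same {n : ℕ} (s r0 r1 r0' r1' : Fin n → Bool) :
    dot' (PsiBB84 s r0 r1) (PsiBB84 s r0' r1') =
    if r0' = r0 ∧ r1' = r1 then 1 else 0 := by
  rw [dot_Psi]
  simp only [dot2_eq', if_pos rfl, if_true, ite_true]
  have h : (∀ x ∈ Finset.univ, r0' x = r0 x ∧ r1' x = r1 x) ↔ (r0' = r0 ∧ r1' = r1) := by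
    simp [funext_iff, forall_and]
  rw [Finset.prod_boole]; simp only [h]

lemma vproj_eq_outer {ι : Type*} (v : EuclideanSpace ℂ ι) : vproj v = outer v v := rfl

lemma outer_mul_outer {ι : Type*} [Fintype ι] [DecidableEq ι]
    (v w x y : EuclideanSpace ℂ ι) :
    outer v w * outer x y = dot' w x • outer v y := by
  ext i j
  simp only [Matrix.mul_apply, outer, Matrix.smul_apply, dot', smul_eq_mul, Finset.sum_mul]
  exact Finset.sum_congr rfl (fun _ _ => by ring)

lemma vproj_mul_vproj {ι : Type*} [Fintype ι] [DecidableEq ι] (v w : EuclideanSpace ℂ ι) :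
    vproj v * vproj w = dot' v w • outer v w := by
  rw [vproj_eq_outer, vproj_eq_outer, outer_mul_outer]

lemma triple_vproj {ι : Type*} [Fintype ι] [DecidableEq ι] (v w u : EuclideanSpace ℂ ι) :
    vproj v * vproj w * vproj u = (dot' v w * dot' w u) • outer v u := by
  rw [vproj_mul_vproj, smul_mul_assoc, vproj_eq_outer, outer_mul_outer, smul_smul]

lemma outer_conjTranspose {ι : Type*} (v w : EuclideanSpace ℂ ι) :
    (outer v w)ᴴ = outer w v := by
  ext i j; simp [outer, Matrix.conjTranspose_apply, mul_comm]

lemma sum3_mulM {α β γ R : Type*} [Fintype α] [Fintype β] [Fintype γ]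
    [NonUnitalNonAssocSemiring R] (f : α → R) (g : β → R) (h : γ → R) :
    (∑ x, f x) * (∑ y, g y) * (∑ z, h z) = ∑ x, ∑ y, ∑ z, f x * g y * h z := by
  rw [Finset.sum_mul_sum, Finset.sum_mul]
  refine Finset.sum_congr rfl fun x _ => ?_
  rw [Finset.sum_mul_sum]

lemma kron3_mul {ι₀ ι₁ ι₂ : Type*} [Fintype ι₀] [Fintype ι₁] [Fintype ι₂]
    (A A' : Matrix ι₀ ι₀ ℂ) (B B' : Matrix ι₁ ι₁ ℂ) (C C' : Matrix ι₂ ι₂ ℂ) :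
    kron3 A B C * kron3 A' B' C' = kron3 (A * A') (B * B') (C * C') := by
  ext p q
  simp only [Matrix.mul_apply, kron3]
  rw [sum3_mulM]
  rw [Fintype.sum_prod_type]
  simp only [Fintype.sum_prod_type]
  refine Finset.sum_congr rfl (fun _ _ => ?_)
  refine Finset.sum_congr rfl (fun _ _ => ?_)
  refine Finset.sum_congr rfl (fun _ _ => ?_)
  ring

lemma kron3_smul1 {ι₀ ι₁ ι₂ : Type*} (c : ℂ) (A : Matrix ι₀ ι₀ ℂ) (B : Matrix ι₁ ι₁ ℂ)
    (C : Matrix ι₂ ι₂ ℂ) : kron3 (c • A) B C = c • kron3 A B C := by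
  ext p q; simp [kron3, smul_eq_mul]; ring

lemma kron3_smul2 {ι₀ ι₁ ι₂ : Type*} (c : ℂ) (A : Matrix ι₀ ι₀ ℂ) (B : Matrix ι₁ ι₁ ℂ)
    (C : Matrix ι₂ ι₂ ℂ) : kron3 A (c • B) C = c • kron3 A B C := by
  ext p q; simp [kron3, smul_eq_mul]; ring

lemma kron3_zero2 {ι₀ ι₁ ι₂ : Type*} (A : Matrix ι₀ ι₀ ℂ) (C : Matrix ι₂ ι₂ ℂ) :
    kron3 A (0 : Matrix ι₁ ι₁ ℂ) C = 0 := by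
  ext p q; simp [kron3]

lemma kron3_zero3 {ι₀ ι₁ ι₂ : Type*} (A : Matrix ι₀ ι₀ ℂ) (B : Matrix ι₁ ι₁ ℂ) :
    kron3 A B (0 : Matrix ι₂ ι₂ ℂ) = 0 := by
  ext p q; simp [kron3]

lemma kron3_sum2 {ι₀ ι₁ ι₂ α : Type*} (t : Finset α) (A : Matrix ι₀ ι₀ ℂ)
    (B : α → Matrix ι₁ ι₁ ℂ) (C : Matrix ι₂ ι₂ ℂ) :
    kron3 A (∑ x ∈ t, B x) C = ∑ x ∈ t, kron3 A (B x) C := by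
  ext p q
  simp [kron3, Matrix.sum_apply, Finset.sum_mul, Finset.mul_sum]

lemma kron3_conjTranspose {ι₀ ι₁ ι₂ : Type*} (A : Matrix ι₀ ι₀ ℂ) (B : Matrix ι₁ ι₁ ℂ)
    (C : Matrix ι₂ ι₂ ℂ) : (kron3 A B C)ᴴ = kron3 Aᴴ Bᴴ Cᴴ := by
  ext p q; simp [kron3, Matrix.conjTranspose_apply]

lemma vproj_conjTranspose {ι : Type*} (v : EuclideanSpace ℂ ι) : (vproj v)ᴴ = vproj v := by
  rw [vproj_eq_outer, outer_conjTranspose]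

/-- Coarse-grained projection: sum of `Pi0 u` over `u` agreeing with `t` off the support of `k`. -/
def PtOp {n d0 : ℕ} (k : Fin n → Bool) (Pi0 : (Fin n → Bool) → Matrix (Fin d0) (Fin d0) ℂ)
    (t : Fin n → Bool) : Matrix (Fin d0) (Fin d0) ℂ :=
  ∑ u, if (∀ j, k j = false → u j = t j) then Pi0 u else 0

lemma keyScalar0 {n : ℕ} (s k : Fin n → Bool) (c0 c1 d0 d1 : Fin n → Bool)
    (hyp : c1 = d1) (q1 : Fin n → Bool) :
    (∑ q2 : Fin n → Bool,
      dot' (PsiBB84 (fun j => xor (s j) (k j)) c0 c1) (PsiBB84 s q1 q2) *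
      dot' (PsiBB84 s q1 q2) (PsiBB84 (fun j => xor (s j) (k j)) d0 d1))
    = if c0 = d0 then
        ((2:ℂ) ^ hamW k)⁻¹ * (if (∀ j, k j = false → q1 j = c0 j) then 1 else 0)
      else 0 := by
  set h : Fin n → Bool → ℂ := fun j b =>
    dot' (psiBB84 (xor (s j) (k j)) (c0 j) (c1 j)) (psiBB84 (s j) (q1 j) b) *
    dot' (psiBB84 (s j) (q1 j) b) (psiBB84 (xor (s j) (k j)) (d0 j) (d1 j)) with hh
  have step1 : (∑ q2 : Fin n → Bool,
      dot' (PsiBB84 (fun j => xor (s j) (k j)) c0 c1) (PsiBB84 s q1 q2) *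
      dot' (PsiBB84 s q1 q2) (PsiBB84 (fun j => xor (s j) (k j)) d0 d1))
      = ∏ j, ∑ b, h j b := by
    rw [Finset.prod_univ_sum, Fintype.piFinset_univ]
    exact Finset.sum_congr rfl (fun q2 _ => by
      rw [dot_Psi, dot_Psi, ← Finset.prod_mul_distrib])
  rw [step1]
  rw [Finset.prod_congr rfl (fun j _ => core0 (s j) (xor (s j) (k j)) (q1 j)
      (c0 j) (c1 j) (d0 j) (d1 j) (congrFun hyp j))]
  have hsx : ∀ j, (s j = xor (s j) (k j)) ↔ (k j = false) := by
    intro j; cases s j <;> cases k j <;> simp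
  by_cases hcd : c0 = d0
  · subst hcd
    rw [if_pos rfl]
    have : ∀ j ∈ Finset.univ, (if s j = xor (s j) (k j)
          then (if c0 j = c0 j ∧ q1 j = c0 j then (1:ℂ) else 0)
          else (if c0 j = c0 j then (2:ℂ)⁻¹ else 0))
        = if k j = false then (if q1 j = c0 j then (1:ℂ) else 0) else (2:ℂ)⁻¹ := by
      intro j _
      by_cases hk : k j = false
      · rw [if_pos ((hsx j).mpr hk), if_pos hk]; simp
      · rw [if_neg (fun h => hk ((hsx j).mp h)), if_neg hk, if_pos rfl]
    rw [Finset.prod_congr rfl this, Finset.prod_ite, Finset.prod_const, Finset.prod_boole]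
    have hcard : (Finset.univ.filter fun j => ¬ (k j = false)).card = hamW k := by
      congr 1
      exact Finset.filter_congr (fun x _ => by simp)
    rw [hcard, ← inv_pow]
    have hcond : (∀ i ∈ Finset.univ.filter fun j => k j = false, q1 i = c0 i)
        ↔ (∀ j, k j = false → q1 j = c0 j) := by
      simp [Finset.mem_filter]
    rw [mul_comm]
    congr 1
    simp only [hcond]
  · rw [if_neg hcd]
    obtain ⟨j0, hj0⟩ : ∃ j, c0 j ≠ d0 j := by
      by_contra h; push_neg at h; exact hcd (funext h)
    refine Finset.prod_eq_zero (Finset.mem_univ j0) ?_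
    by_cases h : s j0 = xor (s j0) (k j0)
    · rw [if_pos h, if_neg (fun hc => hj0 hc.1)]
    · rw [if_neg h, if_neg hj0]

lemma keyScalar1 {n : ℕ} (s k : Fin n → Bool) (c0 c1 d0 d1 : Fin n → Bool)
    (hyp : c0 = d0) (q2 : Fin n → Bool) :
    (∑ q1 : Fin n → Bool,
      dot' (PsiBB84 (fun j => xor (s j) (k j)) c0 c1) (PsiBB84 s q1 q2) *
      dot' (PsiBB84 s q1 q2) (PsiBB84 (fun j => xor (s j) (k j)) d0 d1))
    = if c1 = d1 then
        ((2:ℂ) ^ hamW k)⁻¹ * (if (∀ j, k j = false → q2 j = c1 j) then 1 else 0)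
      else 0 := by
  set h : Fin n → Bool → ℂ := fun j a =>
    dot' (psiBB84 (xor (s j) (k j)) (c0 j) (c1 j)) (psiBB84 (s j) a (q2 j)) *
    dot' (psiBB84 (s j) a (q2 j)) (psiBB84 (xor (s j) (k j)) (d0 j) (d1 j)) with hh
  have step1 : (∑ q1 : Fin n → Bool,
      dot' (PsiBB84 (fun j => xor (s j) (k j)) c0 c1) (PsiBB84 s q1 q2) *
      dot' (PsiBB84 s q1 q2) (PsiBB84 (fun j => xor (s j) (k j)) d0 d1))
      = ∏ j, ∑ a, h j a := by
    rw [Finset.prod_univ_sum, Fintype.piFinset_univ]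
    exact Finset.sum_congr rfl (fun q1 _ => by
      rw [dot_Psi, dot_Psi, ← Finset.prod_mul_distrib])
  rw [step1]
  rw [Finset.prod_congr rfl (fun j _ => core1 (s j) (xor (s j) (k j)) (q2 j)
      (c0 j) (c1 j) (d0 j) (d1 j) (congrFun hyp j))]
  have hsx : ∀ j, (s j = xor (s j) (k j)) ↔ (k j = false) := by
    intro j; cases s j <;> cases k j <;> simp
  by_cases hcd : c1 = d1
  · subst hcd
    rw [if_pos rfl]
    have : ∀ j ∈ Finset.univ, (if s j = xor (s j) (k j)
          then (if c1 j = c1 j ∧ q2 j = c1 j then (1:ℂ) else 0)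
          else (if c1 j = c1 j then (2:ℂ)⁻¹ else 0))
        = if k j = false then (if q2 j = c1 j then (1:ℂ) else 0) else (2:ℂ)⁻¹ := by
      intro j _
      by_cases hk : k j = false
      · rw [if_pos ((hsx j).mpr hk), if_pos hk]; simp
      · rw [if_neg (fun h => hk ((hsx j).mp h)), if_neg hk, if_pos rfl]
    rw [Finset.prod_congr rfl this, Finset.prod_ite, Finset.prod_const, Finset.prod_boole]
    have hcard : (Finset.univ.filter fun j => ¬ (k j = false)).card = hamW k := by
      congr 1
      exact Finset.filter_congr (fun x _ => by simp)
    rw [hcard, ← inv_pow]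
    have hcond : (∀ i ∈ Finset.univ.filter fun j => k j = false, q2 i = c1 i)
        ↔ (∀ j, k j = false → q2 j = c1 j) := by
      simp [Finset.mem_filter]
    rw [mul_comm]
    congr 1
    simp only [hcond]
  · rw [if_neg hcd]
    obtain ⟨j0, hj0⟩ : ∃ j, c1 j ≠ d1 j := by
      by_contra h; push_neg at h; exact hcd (funext h)
    refine Finset.prod_eq_zero (Finset.mem_univ j0) ?_
    by_cases h : s j0 = xor (s j0) (k j0)
    · rw [if_pos h, if_neg (fun hc => hj0 hc.1)]
    · rw [if_neg h, if_neg hj0]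

lemma lemA {n d0' : ℕ} (s k : Fin n → Bool) (b' : Bool)
    (Pi0 : (Fin n → Bool) → Matrix (Fin d0') (Fin d0') ℂ)
    (c0 c1 e0 e1 : Fin n → Bool)
    (hyp : rsel (!b') c0 c1 = rsel (!b') e0 e1) :
    (∑ q : (Fin n → Bool) × (Fin n → Bool),
      (dot' (PsiBB84 (fun j => xor (s j) (k j)) c0 c1) (PsiBB84 s q.1 q.2) *
       dot' (PsiBB84 s q.1 q.2) (PsiBB84 (fun j => xor (s j) (k j)) e0 e1)) •
       Pi0 (rsel b' q.1 q.2))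
    = if c0 = e0 ∧ c1 = e1 then
        ((2:ℂ) ^ hamW k)⁻¹ • PtOp k Pi0 (rsel b' c0 c1) else 0 := by
  cases b'
  · simp only [Bool.not_false, rsel_false, rsel_true] at hyp ⊢
    rw [Fintype.sum_prod_type]
    have inner : ∀ q1 : Fin n → Bool,
        (∑ q2 : Fin n → Bool,
          (dot' (PsiBB84 (fun j => xor (s j) (k j)) c0 c1) (PsiBB84 s q1 q2) *
           dot' (PsiBB84 s q1 q2) (PsiBB84 (fun j => xor (s j) (k j)) e0 e1)) • Pi0 q1)
        = (if c0 = e0 then ((2:ℂ) ^ hamW k)⁻¹ *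
            (if (∀ j, k j = false → q1 j = c0 j) then 1 else 0) else 0) • Pi0 q1 := by
      intro q1
      rw [← Finset.sum_smul, keyScalar0 s k c0 c1 e0 e1 hyp q1]
    rw [Finset.sum_congr rfl (fun q1 _ => inner q1)]
    by_cases hcd : c0 = e0
    · rw [if_pos ⟨hcd, hyp⟩]
      rw [PtOp, Finset.smul_sum]
      refine Finset.sum_congr rfl (fun q1 _ => ?_)
      rw [if_pos hcd, mul_smul, ite_smul, one_smul, zero_smul]
    · rw [if_neg (fun hc => hcd hc.1)]
      refine Finset.sum_eq_zero (fun q1 _ => ?_)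
      rw [if_neg hcd, zero_smul]
  · simp only [Bool.not_true, rsel_false, rsel_true] at hyp ⊢
    rw [Fintype.sum_prod_type, Finset.sum_comm]
    have inner : ∀ q2 : Fin n → Bool,
        (∑ q1 : Fin n → Bool,
          (dot' (PsiBB84 (fun j => xor (s j) (k j)) c0 c1) (PsiBB84 s q1 q2) *
           dot' (PsiBB84 s q1 q2) (PsiBB84 (fun j => xor (s j) (k j)) e0 e1)) • Pi0 q2)
        = (if c1 = e1 then ((2:ℂ) ^ hamW k)⁻¹ *
            (if (∀ j, k j = false → q2 j = c1 j) then 1 else 0) else 0) • Pi0 q2 := by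
      intro q2
      rw [← Finset.sum_smul, keyScalar1 s k c0 c1 e0 e1 hyp q2]
    rw [Finset.sum_congr rfl (fun q2 _ => inner q2)]
    by_cases hcd : c1 = e1
    · rw [if_pos ⟨hyp, hcd⟩]
      rw [PtOp, Finset.smul_sum]
      refine Finset.sum_congr rfl (fun q2 _ => ?_)
      rw [if_pos hcd, mul_smul, ite_smul, one_smul, zero_smul]
    · rw [if_neg (fun hc => hcd hc.2)]
      refine Finset.sum_eq_zero (fun q2 _ => ?_)
      rw [if_neg hcd, zero_smul]

lemma vanish {n : ℕ} (s k : Fin n → Bool) (b' : Bool) (q1 q2 c0 c1 : Fin n → Bool)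
    (hex : ¬ ∀ j, k j = false → rsel b' q1 q2 j = rsel b' c0 c1 j) :
    dot' (PsiBB84 s q1 q2) (PsiBB84 (fun j => xor (s j) (k j)) c0 c1) = 0 := by
  push_neg at hex
  obtain ⟨j0, hk, hne⟩ := hex
  rw [dot_Psi]
  refine Finset.prod_eq_zero (Finset.mem_univ j0) ?_
  rw [dot2_eq']
  have hs : s j0 = xor (s j0) (k j0) := by rw [hk, Bool.xor_false]
  rw [if_pos hs, if_neg]
  intro hcc
  cases b'
  · rw [rsel_false, rsel_false] at hne; exact hne hcc.1.symm
  · rw [rsel_true, rsel_true] at hne; exact hne hcc.2.symm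

lemma Pt_mul {n d0 : ℕ} (k : Fin n → Bool)
    (Pi0 : (Fin n → Bool) → Matrix (Fin d0) (Fin d0) ℂ)
    (hidem : ∀ x, Pi0 x * Pi0 x = Pi0 x)
    (horth : ∀ x y, x ≠ y → Pi0 x * Pi0 y = 0)
    (u t : Fin n → Bool) :
    Pi0 u * PtOp k Pi0 t = if (∀ j, k j = false → u j = t j) then Pi0 u else 0 := by
  rw [PtOp, Finset.mul_sum]
  rw [Finset.sum_eq_single u (fun v _ hv => ?_) (fun h => absurd (Finset.mem_univ u) h)]
  · rw [mul_ite, mul_zero, hidem u]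
  · rw [mul_ite, mul_zero, horth u v (fun h => hv h.symm)]
    simp only [ite_self]

end Aux

/-- `2^{W(k)} · F G F` is an orthogonal projection, where `F` and `G` are the
projectors built from the BB84 string states and two projective measurements. -/
theorem stmt4 {n d0 d1 : ℕ} (hn : 1 ≤ n) (s k : Fin n → Bool) (b' : Bool)
    (Pi0 : (Fin n → Bool) → Matrix (Fin d0) (Fin d0) ℂ)
    (Pi1 : (Fin n → Bool) → Matrix (Fin d1) (Fin d1) ℂ)
    (hPi0 : IsProjMeasurement Pi0) (hPi1 : IsProjMeasurement Pi1)
    (F G : Matrix ((Fin n → Fin 2 × Fin 2) × Fin d0 × Fin d1)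
      ((Fin n → Fin 2 × Fin 2) × Fin d0 × Fin d1) ℂ)
    (hF : F = ∑ r0 : Fin n → Bool, ∑ r1 : Fin n → Bool,
      kron3 (vproj (PsiBB84 s r0 r1)) (Pi0 (rsel b' r0 r1)) 1)
    (hG : G = ∑ r0 : Fin n → Bool, ∑ r1 : Fin n → Bool,
      kron3 (vproj (PsiBB84 (fun j => xor (s j) (k j)) r0 r1)) 1 (Pi1 (rsel (!b') r0 r1))) :
    ((2 : ℂ) ^ hamW k • (F * G * F)) * ((2 : ℂ) ^ hamW k • (F * G * F))
        = (2 : ℂ) ^ hamW k • (F * G * F)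
      ∧ ((2 : ℂ) ^ hamW k • (F * G * F))ᴴ = (2 : ℂ) ^ hamW k • (F * G * F) := by
  obtain ⟨hPi0idem, hPi0herm, hPi0orth, -⟩ := hPi0
  obtain ⟨hPi1idem, hPi1herm, hPi1orth, -⟩ := hPi1
  have hcne : ((2:ℂ) ^ hamW k) ≠ 0 := pow_ne_zero _ two_ne_zero
  have hFp : F = ∑ p : (Fin n → Bool) × (Fin n → Bool),
      kron3 (vproj (PsiBB84 s p.1 p.2)) (Pi0 (rsel b' p.1 p.2))
        (1 : Matrix (Fin d1) (Fin d1) ℂ) := by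
    rw [hF]
    exact (Fintype.sum_prod_type (fun p : (Fin n → Bool) × (Fin n → Bool) =>
      kron3 (vproj (PsiBB84 s p.1 p.2)) (Pi0 (rsel b' p.1 p.2))
        (1 : Matrix (Fin d1) (Fin d1) ℂ))).symm
  have hGp : G = ∑ p : (Fin n → Bool) × (Fin n → Bool),
      kron3 (vproj (PsiBB84 (fun j => xor (s j) (k j)) p.1 p.2))
        (1 : Matrix (Fin d0) (Fin d0) ℂ) (Pi1 (rsel (!b') p.1 p.2)) := by
    rw [hG]
    exact (Fintype.sum_prod_type (fun p : (Fin n → Bool) × (Fin n → Bool) =>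
      kron3 (vproj (PsiBB84 (fun j => xor (s j) (k j)) p.1 p.2))
        (1 : Matrix (Fin d0) (Fin d0) ℂ) (Pi1 (rsel (!b') p.1 p.2)))).symm
  -- F is a projection
  have hFF : F * F = F := by
    rw [hFp, Finset.sum_mul_sum]
    refine Finset.sum_congr rfl fun p _ => ?_
    have term : ∀ q : (Fin n → Bool) × (Fin n → Bool),
        kron3 (vproj (PsiBB84 s p.1 p.2)) (Pi0 (rsel b' p.1 p.2))
          (1 : Matrix (Fin d1) (Fin d1) ℂ) *
        kron3 (vproj (PsiBB84 s q.1 q.2)) (Pi0 (rsel b' q.1 q.2)) 1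
        = if q = p then kron3 (vproj (PsiBB84 s p.1 p.2)) (Pi0 (rsel b' p.1 p.2)) 1
          else 0 := by
      intro q
      by_cases hqp : q = p
      · subst hqp
        rw [if_pos rfl, kron3_mul, vproj_mul_vproj, dot_Psi_same, if_pos ⟨rfl, rfl⟩,
          one_smul, ← vproj_eq_outer, hPi0idem, one_mul]
      · rw [if_neg hqp, kron3_mul, vproj_mul_vproj, kron3_smul1, dot_Psi_same,
          if_neg (fun h => hqp (Prod.ext h.1 h.2)), zero_smul]
    rw [Finset.sum_congr rfl (fun q _ => term q),
      Finset.sum_ite_eq' Finset.univ p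
        (fun _ => kron3 (vproj (PsiBB84 s p.1 p.2)) (Pi0 (rsel b' p.1 p.2)) 1),
      if_pos (Finset.mem_univ p)]
  -- G F G = 2^{-W} Gtilde
  have hGFG : G * F * G = ((2:ℂ) ^ hamW k)⁻¹ • ∑ p : (Fin n → Bool) × (Fin n → Bool),
      kron3 (vproj (PsiBB84 (fun j => xor (s j) (k j)) p.1 p.2))
        (PtOp k Pi0 (rsel b' p.1 p.2)) (Pi1 (rsel (!b') p.1 p.2)) := by
    rw [hGp, hFp, sum3_mulM]
    have inner : ∀ p r : (Fin n → Bool) × (Fin n → Bool),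
        (∑ q : (Fin n → Bool) × (Fin n → Bool),
          kron3 (vproj (PsiBB84 (fun j => xor (s j) (k j)) p.1 p.2)) 1
              (Pi1 (rsel (!b') p.1 p.2)) *
            kron3 (vproj (PsiBB84 s q.1 q.2)) (Pi0 (rsel b' q.1 q.2)) 1 *
            kron3 (vproj (PsiBB84 (fun j => xor (s j) (k j)) r.1 r.2)) 1
              (Pi1 (rsel (!b') r.1 r.2)))
        = if r = p then ((2:ℂ) ^ hamW k)⁻¹ •
            kron3 (vproj (PsiBB84 (fun j => xor (s j) (k j)) p.1 p.2))
            (PtOp k Pi0 (rsel b' p.1 p.2)) (Pi1 (rsel (!b') p.1 p.2)) else 0 := by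
      intro p r
      have expand : ∀ q : (Fin n → Bool) × (Fin n → Bool),
          kron3 (vproj (PsiBB84 (fun j => xor (s j) (k j)) p.1 p.2)) 1
              (Pi1 (rsel (!b') p.1 p.2)) *
            kron3 (vproj (PsiBB84 s q.1 q.2)) (Pi0 (rsel b' q.1 q.2)) 1 *
            kron3 (vproj (PsiBB84 (fun j => xor (s j) (k j)) r.1 r.2)) 1
              (Pi1 (rsel (!b') r.1 r.2))
          = kron3 (outer (PsiBB84 (fun j => xor (s j) (k j)) p.1 p.2)
                (PsiBB84 (fun j => xor (s j) (k j)) r.1 r.2))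
              ((dot' (PsiBB84 (fun j => xor (s j) (k j)) p.1 p.2) (PsiBB84 s q.1 q.2) *
                dot' (PsiBB84 s q.1 q.2)
                  (PsiBB84 (fun j => xor (s j) (k j)) r.1 r.2)) • Pi0 (rsel b' q.1 q.2))
              (Pi1 (rsel (!b') p.1 p.2) * Pi1 (rsel (!b') r.1 r.2)) := by
        intro q
        rw [kron3_mul, kron3_mul, triple_vproj, one_mul, mul_one, mul_one,
          kron3_smul1, ← kron3_smul2]
      rw [Finset.sum_congr rfl (fun q _ => expand q), ← kron3_sum2]
      by_cases hpr : rsel (!b') p.1 p.2 = rsel (!b') r.1 r.2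
      · rw [lemA s k b' Pi0 p.1 p.2 r.1 r.2 hpr]
        by_cases hrp : r = p
        · subst hrp
          rw [if_pos ⟨rfl, rfl⟩, if_pos rfl, kron3_smul2, hPi1idem, ← vproj_eq_outer]
        · rw [if_neg (fun h => hrp (Prod.ext h.1.symm h.2.symm)), kron3_zero2,
            if_neg hrp]
      · rw [hPi1orth _ _ hpr, kron3_zero3, if_neg (fun hrp => hpr (by rw [hrp]))]
    rw [Finset.sum_congr rfl (fun p _ => Finset.sum_comm)]
    rw [Finset.sum_congr rfl (fun p _ =>
      (Finset.sum_congr rfl (fun r _ => inner p r)).trans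
        ((Finset.sum_ite_eq' Finset.univ p (fun _ => ((2:ℂ) ^ hamW k)⁻¹ •
          kron3 (vproj (PsiBB84 (fun j => xor (s j) (k j)) p.1 p.2))
            (PtOp k Pi0 (rsel b' p.1 p.2)) (Pi1 (rsel (!b') p.1 p.2)))).trans
          (if_pos (Finset.mem_univ p))))]
    rw [Finset.smul_sum]
  -- F Gtilde F = F G F
  have hFGtF : F * (∑ p : (Fin n → Bool) × (Fin n → Bool),
      kron3 (vproj (PsiBB84 (fun j => xor (s j) (k j)) p.1 p.2))
        (PtOp k Pi0 (rsel b' p.1 p.2)) (Pi1 (rsel (!b') p.1 p.2))) * F = F * G * F := by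
    rw [hFp, hGp, sum3_mulM, sum3_mulM]
    refine Finset.sum_congr rfl fun q _ => Finset.sum_congr rfl fun p _ =>
      Finset.sum_congr rfl fun r _ => ?_
    rw [kron3_mul, kron3_mul, kron3_mul, kron3_mul, triple_vproj,
      kron3_smul1, kron3_smul1]
    simp only [one_mul, mul_one]
    by_cases hcond : ∀ j, k j = false → rsel b' q.1 q.2 j = rsel b' p.1 p.2 j
    · rw [Pt_mul k Pi0 hPi0idem hPi0orth, if_pos hcond]
    · have h0 : dot' (PsiBB84 s q.1 q.2)
          (PsiBB84 (fun j => xor (s j) (k j)) p.1 p.2) = 0 :=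
        vanish s k b' q.1 q.2 p.1 p.2 hcond
      simp only [h0, zero_mul, zero_smul]
  -- key multiplicative identity
  have key : F * G * F * (F * G * F) = ((2:ℂ) ^ hamW k)⁻¹ • (F * G * F) := by
    have e1 : F * G * F * (F * G * F) = F * G * F * F * G * F := by
      simp only [mul_assoc]
    rw [e1, mul_assoc (F * G) F F, hFF, mul_assoc F G F, mul_assoc F (G * F) G, hGFG,
      mul_smul_comm, smul_mul_assoc, hFGtF, mul_assoc]
  constructor
  · rw [smul_mul_assoc, mul_smul_comm, key, smul_smul, smul_smul]
    congr 1
    field_simp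
  · have hconj : star ((2:ℂ) ^ hamW k) = (2:ℂ) ^ hamW k := by
      simp
    have hFH : Fᴴ = F := by
      rw [hFp, Matrix.conjTranspose_sum]
      refine Finset.sum_congr rfl fun p _ => ?_
      rw [kron3_conjTranspose, vproj_conjTranspose, hPi0herm, Matrix.conjTranspose_one]
    have hGH : Gᴴ = G := by
      rw [hGp, Matrix.conjTranspose_sum]
      refine Finset.sum_congr rfl fun p _ => ?_
      rw [kron3_conjTranspose, vproj_conjTranspose, hPi1herm, Matrix.conjTranspose_one]
    rw [Matrix.conjTranspose_smul, hconj, Matrix.conjTranspose_mul,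
      Matrix.conjTranspose_mul, hFH, hGH, mul_assoc]

end
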